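/- Let r ≥ 1 be an integer, let d_0, …, d_r ∈ (0,1) with Σ_{k=0}^{r} d_k = 1, let I_0, …, I_r ≥ 0, let ε > 0, τ ≥ 0 and t ≥ 1. Define the CWENOZ weights α_k^Z = d_k (1 + (τ/(I_k + ε))^t) and ω_k^Z = α_k^Z / Σ_{i=0}^{r} α_i^Z for k = 0, …, r. Then ω_k^Z ∈ (0,1) for every k, Σ_{k=0}^{r} ω_k^Z = 1, and the nonlinear weights deviate from the linear ones by at most |ω_k^Z − d_k| ≤ d_k (τ/ε)^t for every k = 0, …, r. -/

import Mathlib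

/-- Cell average of `u` over the cell `Ω_j = [(j-1/2)h, (j+1/2)h]`. -/
noncomputable def cellAvg (h : ℝ) (j : ℤ) (u : ℝ → ℝ) : ℝ :=
  (1 / h) * ∫ x in (((j : ℝ) - 1/2) * h)..(((j : ℝ) + 1/2) * h), u x

/-- Jiang–Shu smoothness indicator on `Ω_0 = [-h/2, h/2]` for a polynomial of degree ≤ q. -/
noncomputable def JS (q : ℕ) (h : ℝ) (P : Polynomial ℝ) : ℝ :=
  ∑ l ∈ Finset.Icc 1 q, h ^ (2 * l - 1) *
    ∫ x in (-h/2)..(h/2), (Polynomial.eval x ((⇑Polynomial.derivative)^[l] P)) ^ 2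

/-- The symmetric matrix representing the Jiang–Shu indicator as a bilinear form:
for `1 ≤ i ≤ j`, `C i j = ∑_{m=1}^{i} 2^(2m-i-j)/((i-m)!(j-m)!(i+j-2m+1))` if `i+j` is even,
and `0` if `i+j` is odd (extended symmetrically via `min i j`). -/
noncomputable def Cmat (i j : ℕ) : ℝ :=
  if (i + j) % 2 = 0 then
    ∑ m ∈ Finset.Icc 1 (min i j),
      (2 : ℝ) ^ (2 * (m : ℤ) - i - j) /
        ((Nat.factorial (i - m)) * (Nat.factorial (j - m)) * ((i + j - 2 * m + 1 : ℕ) : ℝ))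
  else 0


/-- basic properties of the CWENOZ nonlinear weights: they lie in `(0,1)`,
sum to one, and deviate from the linear coefficients by at most `d_k (τ/ε)^t`. -/
theorem cwenoz_weights_properties (r : ℕ) (hr : 1 ≤ r) (d I : ℕ → ℝ)
    (hd : ∀ k ≤ r, d k ∈ Set.Ioo (0 : ℝ) 1)
    (hdsum : ∑ k ∈ Finset.range (r + 1), d k = 1)
    (hI : ∀ k ≤ r, 0 ≤ I k)
    (ε τ t : ℝ) (hε : 0 < ε) (hτ : 0 ≤ τ) (ht : 1 ≤ t)
    (α ω : ℕ → ℝ)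
    (hα : ∀ k ≤ r, α k = d k * (1 + (τ / (I k + ε)) ^ t))
    (hω : ∀ k ≤ r, ω k = α k / ∑ i ∈ Finset.range (r + 1), α i) :
    (∀ k ≤ r, ω k ∈ Set.Ioo (0 : ℝ) 1) ∧
    (∑ k ∈ Finset.range (r + 1), ω k = 1) ∧
    (∀ k ≤ r, |ω k - d k| ≤ d k * (τ / ε) ^ t) := by
  have hM : (0:ℝ) ≤ (τ/ε)^t := Real.rpow_nonneg (div_nonneg hτ hε.le) t
  set M := (τ/ε)^t with hMdef
  have hx : ∀ k ≤ r, 0 ≤ (τ/(I k+ε))^t ∧ (τ/(I k+ε))^t ≤ M := by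
    intro k hk
    have hIk := hI k hk
    have hpos : (0:ℝ) < I k + ε := by linarith
    refine ⟨Real.rpow_nonneg (div_nonneg hτ hpos.le) t, ?_⟩
    apply Real.rpow_le_rpow (div_nonneg hτ hpos.le) _ (by linarith)
    gcongr
    linarith
  have hαlb : ∀ k ≤ r, d k ≤ α k := by
    intro k hk
    rw [hα k hk]
    nlinarith [(hd k hk).1, (hx k hk).1]
  have hαpos : ∀ k ≤ r, 0 < α k := fun k hk => lt_of_lt_of_le (hd k hk).1 (hαlb k hk)
  set S := ∑ i ∈ Finset.range (r+1), α i with hSdef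
  have hS1 : 1 ≤ S := by
    rw [← hdsum]
    apply Finset.sum_le_sum
    intro i hi
    exact hαlb i (Nat.lt_succ_iff.mp (Finset.mem_range.mp hi))
  have hSpos : 0 < S := lt_of_lt_of_le one_pos hS1
  -- S = 1 + σ
  set σ := ∑ i ∈ Finset.range (r+1), d i * (τ/(I i+ε))^t with hσdef
  have hSeq : S = 1 + σ := by
    rw [hSdef, hσdef, ← hdsum, ← Finset.sum_add_distrib]
    apply Finset.sum_congr rfl
    intro i hi
    rw [hα i (Nat.lt_succ_iff.mp (Finset.mem_range.mp hi))]
    ring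
  have hσ0 : 0 ≤ σ := Finset.sum_nonneg fun i hi =>
    mul_nonneg (hd i (Nat.lt_succ_iff.mp (Finset.mem_range.mp hi))).1.le
      (hx i (Nat.lt_succ_iff.mp (Finset.mem_range.mp hi))).1
  have hσM : σ ≤ M := by
    calc σ ≤ ∑ i ∈ Finset.range (r+1), d i * M := by
            apply Finset.sum_le_sum
            intro i hi
            have hi' := Nat.lt_succ_iff.mp (Finset.mem_range.mp hi)
            exact mul_le_mul_of_nonneg_left (hx i hi').2 (hd i hi').1.le
      _ = M := by rw [← Finset.sum_mul, hdsum, one_mul]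
  refine ⟨?_, ?_, ?_⟩
  · intro k hk
    rw [hω k hk]
    constructor
    · exact div_pos (hαpos k hk) hSpos
    · rw [div_lt_one hSpos]
      have hj : (if k = 0 then 1 else 0) ∈ Finset.range (r+1) := by
        split <;> simp <;> omega
      have hjk : k ≠ (if k = 0 then 1 else 0) := by split <;> omega
      exact Finset.single_lt_sum hjk.symm (Finset.mem_range.mpr (by omega)) hj
        (hαpos _ (by split <;> omega))
        (fun i hi _ => (hαpos i (Nat.lt_succ_iff.mp (Finset.mem_range.mp hi))).le)
  · rw [Finset.sum_congr rfl fun k hk => hω k (Nat.lt_succ_iff.mp (Finset.mem_range.mp hk)),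
      ← Finset.sum_div, ← hSdef, div_self hSpos.ne']
  · intro k hk
    have hdk := hd k hk
    have hxk := hx k hk
    rw [hω k hk, hα k hk]
    set x := (τ/(I k+ε))^t
    have key : d k * (1 + x) / S - d k = d k * (x - σ) / S := by
      field_simp
      rw [hSeq]; ring
    rw [key, abs_div, abs_of_pos hSpos, div_le_iff₀ hSpos, abs_mul, abs_of_pos hdk.1]
    have habs : |x - σ| ≤ M := abs_le.mpr ⟨by linarith [hxk.1, hσM], by linarith [hxk.2, hσ0]⟩
    nlinarith [mul_le_mul_of_nonneg_left habs hdk.1.le, mul_nonneg hdk.1.le hM, hS1]
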